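/- Suppose 1/n ≪ α ≪ ξ ≪ 1. Let G be a bipartite graph on (A,B) with |A|=|B|=n and minimum degree δ(G) ≥ (1/2+4ξ)n. For each vertex v let n_v ∈ ℕ satisfy (ξ-α)n ≤ n_v ≤ (ξ+α)n, and suppose Σ_{a∈A} n_a = Σ_{b∈B} n_b. Then G contains a spanning subgraph G' with d_{G'}(v) = n_v for every vertex v. -/

import Mathlib

open Finset

section Aux

variable {β : Type} [Fintype β] [DecidableEq β]

/-- Auxiliary relation for the vertex-splitting reduction of degree-constrained
subgraphs to bipartite perfect matchings. -/
def myRel (A B : Finset β) (E : Finset (β × β)) (nv : β → ℕ)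
    (x : (Σ a : {x // x ∈ A}, Fin (nv a.1)) ⊕ {e // e ∈ E})
    (r : {e // e ∈ E} ⊕ (Σ b : {x // x ∈ B}, Fin (nv b.1))) : Prop :=
  match x, r with
  | .inl a, .inl e => (e.1.1 : β) = a.1.1
  | .inl _, .inr _ => False
  | .inr e, .inl e' => e = e'
  | .inr e, .inr bj => e.1.2 = bj.1.1

theorem aux_construct (A B : Finset β) (G : SimpleGraph β) [DecidableRel G.Adj]
    (hdisj : Disjoint A B)
    (hbip : ∀ x y : β, G.Adj x y → (x ∈ A ∧ y ∈ B) ∨ (x ∈ B ∧ y ∈ A))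
    (nv : β → ℕ)
    (hsum : ∑ a ∈ A, nv a = ∑ b ∈ B, nv b)
    (GH : ∀ P ⊆ A, ∀ T ⊆ B, ∑ a ∈ P, nv a ≤
      ((P ×ˢ T).filter fun p : β × β => G.Adj p.1 p.2).card + ∑ b ∈ B \ T, nv b) :
    ∃ G' : SimpleGraph β, G' ≤ G ∧ ∀ v ∈ A ∪ B, (G'.neighborSet v).ncard = nv v := by
  classical
  set E : Finset (β × β) := (A ×ˢ B).filter (fun p => G.Adj p.1 p.2) with hE
  have hEmem : ∀ e ∈ E, e.1 ∈ A ∧ e.2 ∈ B ∧ G.Adj e.1 e.2 := by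
    intro e he
    simp only [hE, mem_filter, mem_product] at he
    exact ⟨he.1.1, he.1.2, he.2⟩
  set t : ((Σ a : {x // x ∈ A}, Fin (nv a.1)) ⊕ {e // e ∈ E}) →
      Finset ({e // e ∈ E} ⊕ (Σ b : {x // x ∈ B}, Fin (nv b.1))) :=
    fun x => Finset.univ.filter (myRel A B E nv x) with ht
  -- Hall's condition
  have hmemt : ∀ x r, r ∈ t x ↔ myRel A B E nv x r := by
    intro x r
    simp [ht]
  have hall : ∀ s : Finset ((Σ a : {x // x ∈ A}, Fin (nv a.1)) ⊕ {e // e ∈ E}),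
      s.card ≤ (s.biUnion t).card := by
    intro s
    set SA := s.toLeft with hSA
    set SE := s.toRight with hSE
    set P : Finset {x // x ∈ A} := SA.image Sigma.fst with hP
    set P' : Finset β := P.image Subtype.val with hP'
    set Q : Finset β := SE.image (fun e => (e.1.2 : β)) with hQ
    have hP'A : P' ⊆ A := by
      intro x hx
      obtain ⟨a, -, rfl⟩ := Finset.mem_image.mp hx
      exact a.2
    have hQB : Q ⊆ B := by
      intro x hx
      obtain ⟨e, -, rfl⟩ := Finset.mem_image.mp hx
      exact (hEmem e e.2).2.1
    have hSAcard : SA.card ≤ ∑ a ∈ P', nv a := by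
      calc SA.card ≤ (P.sigma fun a => (univ : Finset (Fin (nv a.1)))).card := by
            apply Finset.card_le_card
            intro x hx
            rw [Finset.mem_sigma]
            exact ⟨Finset.mem_image_of_mem _ hx, Finset.mem_univ _⟩
        _ = ∑ a ∈ P, nv a.1 := by rw [Finset.card_sigma]; simp
        _ = ∑ a ∈ P', nv a :=
            (Finset.sum_image (fun x _ y _ h => Subtype.ext h)).symm
    set N := s.biUnion t with hN
    set F1 : Finset {e // e ∈ E} :=
      univ.filter (fun e : {e // e ∈ E} => (e.1.1 : β) ∈ P' ∧ (e.1.2 : β) ∉ Q) with hF1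
    have hNL : F1 ∪ SE ⊆ N.toLeft := by
      intro e he
      rw [Finset.mem_toLeft, hN, Finset.mem_biUnion]
      rcases Finset.mem_union.mp he with he | he
      · obtain ⟨h1, -⟩ := (Finset.mem_filter.mp he).2
        obtain ⟨a, haP, hae⟩ := Finset.mem_image.mp h1
        obtain ⟨x, hxSA, hxa⟩ := Finset.mem_image.mp haP
        refine ⟨Sum.inl x, Finset.mem_toLeft.mp hxSA, ?_⟩
        rw [hmemt]
        show (e.1.1 : β) = (x.1 : β)
        rw [hxa]
        exact hae.symm
      · refine ⟨Sum.inr e, Finset.mem_toRight.mp he, ?_⟩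
        rw [hmemt]
        show e = e
        rfl
    set F2 : Finset (Σ b : {x // x ∈ B}, Fin (nv b.1)) :=
      univ.filter (fun x : Σ b : {x // x ∈ B}, Fin (nv b.1) => (x.1.1 : β) ∈ Q) with hF2
    have hNR : F2 ⊆ N.toRight := by
      intro bj hbj
      rw [Finset.mem_toRight, hN, Finset.mem_biUnion]
      have hQm := (Finset.mem_filter.mp hbj).2
      obtain ⟨e, heSE, hee⟩ := Finset.mem_image.mp hQm
      refine ⟨Sum.inr e, Finset.mem_toRight.mp heSE, ?_⟩
      rw [hmemt]
      show (e.1.2 : β) = (bj.1.1 : β)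
      exact hee
    have hdisjF : Disjoint F1 SE := by
      rw [Finset.disjoint_left]
      intro e he heSE
      exact ((Finset.mem_filter.mp he).2).2 (Finset.mem_image_of_mem _ heSE)
    have hcardfilter : F1.card
        = ((P' ×ˢ (B \ Q)).filter (fun p : β × β => G.Adj p.1 p.2)).card := by
      refine Finset.card_bij (fun e _ => e.1) ?_ ?_ ?_
      · intro e he
        obtain ⟨h1, h2⟩ := (Finset.mem_filter.mp he).2
        obtain ⟨hA', hB', hAdj⟩ := hEmem e.1 e.2
        rw [Finset.mem_filter, Finset.mem_product]
        exact ⟨⟨h1, Finset.mem_sdiff.mpr ⟨hB', h2⟩⟩, hAdj⟩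
      · intro e₁ _ e₂ _ h
        exact Subtype.ext h
      · intro p hp
        rw [Finset.mem_filter, Finset.mem_product] at hp
        obtain ⟨⟨hp1, hp2⟩, hadj⟩ := hp
        have hpE : p ∈ E := by
          rw [hE, Finset.mem_filter, Finset.mem_product]
          exact ⟨⟨hP'A hp1, (Finset.mem_sdiff.mp hp2).1⟩, hadj⟩
        exact ⟨⟨p, hpE⟩,
          Finset.mem_filter.mpr ⟨Finset.mem_univ _, hp1, (Finset.mem_sdiff.mp hp2).2⟩, rfl⟩
    have hcardF2 : F2.card = ∑ b ∈ Q, nv b := by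
      have heq : F2 = (univ.filter (fun b : {x // x ∈ B} => (b : β) ∈ Q)).sigma
          (fun _ => univ) := by
        ext x
        simp [hF2, Finset.mem_sigma]
      rw [heq, Finset.card_sigma]
      simp only [Finset.card_univ, Fintype.card_fin]
      refine Finset.sum_bij (fun b _ => (b : β)) ?_ ?_ ?_ ?_
      · intro b hb
        exact (Finset.mem_filter.mp hb).2
      · intro b₁ _ b₂ _ h
        exact Subtype.ext h
      · intro q hq
        exact ⟨⟨q, hQB hq⟩, Finset.mem_filter.mpr ⟨Finset.mem_univ _, hq⟩, rfl⟩
      · intro b _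
        rfl
    have hGH := GH P' hP'A (B \ Q) (Finset.sdiff_subset)
    have hBQ : B \ (B \ Q) = Q := by
      rw [_root_.sdiff_sdiff_right_self]
      exact inf_eq_right.mpr hQB
    rw [hBQ] at hGH
    have hstot : s.card = SA.card + SE.card := (Finset.card_toLeft_add_card_toRight).symm
    have hNtot : N.toLeft.card + N.toRight.card = N.card :=
      Finset.card_toLeft_add_card_toRight
    have hF1u : (F1 ∪ SE).card = F1.card + SE.card := Finset.card_union_of_disjoint hdisjF
    have hL := Finset.card_le_card hNL
    have hR := Finset.card_le_card hNR
    omega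
  obtain ⟨f, hfinj, hft⟩ := (Finset.all_card_le_biUnion_card_iff_exists_injective t).mp hall
  have hfbij : Function.Bijective f := by
    rw [Fintype.bijective_iff_injective_and_card]
    refine ⟨hfinj, ?_⟩
    simp only [Fintype.card_sum, Fintype.card_sigma, Fintype.card_fin,
      Finset.sum_coe_sort, Fintype.card_coe]
    omega
  -- the chosen subgraph
  set G' : SimpleGraph β := SimpleGraph.fromRel
    (fun x y => ∃ e : {e // e ∈ E}, f (Sum.inr e) ≠ Sum.inl e ∧ e.1.1 = x ∧ e.1.2 = y) with hG'
  refine ⟨G', ?_, ?_⟩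
  · intro x y hxy
    obtain ⟨hne, h | h⟩ := hxy
    · obtain ⟨e, -, h1, h2⟩ := h
      obtain ⟨-, -, hadj⟩ := hEmem e e.2
      rwa [h1, h2] at hadj
    · obtain ⟨e, -, h1, h2⟩ := h
      obtain ⟨-, -, hadj⟩ := hEmem e e.2
      rw [h1, h2] at hadj
      exact hadj.symm
  · -- degree computation
    intro v hv
    rcases Finset.mem_union.mp hv with hvA | hvB
    · -- v ∈ A
      set Da : Finset {e // e ∈ E} :=
        univ.filter (fun e => f (Sum.inr e) ≠ Sum.inl e ∧ (e.1.1 : β) = v) with hDa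
      have hDamem : ∀ e : {e // e ∈ E},
          e ∈ Da ↔ f (Sum.inr e) ≠ Sum.inl e ∧ (e.1.1 : β) = v := by
        intro e; simp [hDa]
      have hset : G'.neighborSet v = ↑(Da.image (fun e => e.1.2)) := by
        ext y
        simp only [SimpleGraph.mem_neighborSet, hG', SimpleGraph.fromRel_adj,
          Finset.coe_image, Set.mem_image, Finset.mem_coe]
        constructor
        · rintro ⟨hne, ⟨e, hcond, h1, h2⟩ | ⟨e, hcond, h1, h2⟩⟩
          · exact ⟨e, (hDamem e).mpr ⟨hcond, h1⟩, h2⟩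
          · exact absurd hvA (Finset.disjoint_right.mp hdisj (h2 ▸ (hEmem e e.2).2.1))
        · rintro ⟨e, he, rfl⟩
          obtain ⟨hcond, h1⟩ := (hDamem e).mp he
          refine ⟨?_, Or.inl ⟨e, hcond, h1, rfl⟩⟩
          intro hvy
          exact Finset.disjoint_left.mp hdisj hvA (hvy ▸ (hEmem e e.2).2.1)
      rw [hset, Set.ncard_coe_finset, Finset.card_image_of_injOn]
      · -- Da.card = nv v
        have h1 : ∀ j : Fin (nv v), ∃ e : {e // e ∈ E},
            f (Sum.inl ⟨⟨v, hvA⟩, j⟩) = Sum.inl e ∧ (e.1.1 : β) = v := by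
          intro j
          have hm := (hmemt _ _).mp (hft (Sum.inl ⟨⟨v, hvA⟩, j⟩))
          rcases hfe : f (Sum.inl ⟨⟨v, hvA⟩, j⟩) with e | bj
          · rw [hfe] at hm
            simp only [myRel] at hm
            exact ⟨e, rfl, hm⟩
          · rw [hfe] at hm
            simp only [myRel] at hm
        have hcard : (Finset.univ : Finset (Fin (nv v))).card = Da.card := by
          refine Finset.card_bij (fun j _ => (h1 j).choose) ?_ ?_ ?_
          · intro j _
            obtain ⟨hfe, hfst⟩ := (h1 j).choose_spec
            refine (hDamem _).mpr ⟨?_, hfst⟩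
            intro heq
            exact Sum.inl_ne_inr (hfinj (hfe.trans heq.symm))
          · intro j₁ _ j₂ _ heq
            obtain ⟨hfe₁, -⟩ := (h1 j₁).choose_spec
            obtain ⟨hfe₂, -⟩ := (h1 j₂).choose_spec
            replace heq : (h1 j₁).choose = (h1 j₂).choose := heq
            rw [heq] at hfe₁
            simpa using hfinj (hfe₁.trans hfe₂.symm)
          · intro e he
            obtain ⟨hne, hfst⟩ := (hDamem e).mp he
            obtain ⟨x, hx⟩ := hfbij.2 (Sum.inl e)
            rcases x with ⟨⟨w, hw⟩, j⟩ | e'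
            · have hm := (hmemt _ _).mp (hft (Sum.inl ⟨⟨w, hw⟩, j⟩))
              rw [hx] at hm
              simp only [myRel] at hm
              have hwv : w = v := hm.symm.trans hfst
              subst hwv
              refine ⟨j, Finset.mem_univ j, ?_⟩
              obtain ⟨hfe, -⟩ := (h1 j).choose_spec
              exact Sum.inl.inj (hfe.symm.trans hx)
            · have hm := (hmemt _ _).mp (hft (Sum.inr e'))
              rw [hx] at hm
              simp only [myRel] at hm
              subst hm
              exact absurd hx hne
        rw [← hcard]
        simp
      · intro e₁ h₁ e₂ h₂ heq
        simp only [Finset.mem_coe] at h₁ h₂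
        obtain ⟨-, k₁⟩ := (hDamem e₁).mp h₁
        obtain ⟨-, k₂⟩ := (hDamem e₂).mp h₂
        exact Subtype.ext (Prod.ext (k₁.trans k₂.symm) heq)
    · -- v ∈ B
      set Db : Finset {e // e ∈ E} :=
        univ.filter (fun e => f (Sum.inr e) ≠ Sum.inl e ∧ (e.1.2 : β) = v) with hDb
      have hDbmem : ∀ e : {e // e ∈ E},
          e ∈ Db ↔ f (Sum.inr e) ≠ Sum.inl e ∧ (e.1.2 : β) = v := by
        intro e; simp [hDb]
      have hset : G'.neighborSet v = ↑(Db.image (fun e => e.1.1)) := by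
        ext y
        simp only [SimpleGraph.mem_neighborSet, hG', SimpleGraph.fromRel_adj,
          Finset.coe_image, Set.mem_image, Finset.mem_coe]
        constructor
        · rintro ⟨hne, ⟨e, hcond, h1, h2⟩ | ⟨e, hcond, h1, h2⟩⟩
          · exact absurd hvB (Finset.disjoint_left.mp hdisj (h1 ▸ (hEmem e e.2).1))
          · exact ⟨e, (hDbmem e).mpr ⟨hcond, h2⟩, h1⟩
        · rintro ⟨e, he, rfl⟩
          obtain ⟨hcond, h2⟩ := (hDbmem e).mp he
          refine ⟨?_, Or.inr ⟨e, hcond, rfl, h2⟩⟩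
          intro hvy
          exact Finset.disjoint_right.mp hdisj hvB (hvy ▸ (hEmem e e.2).1)
      rw [hset, Set.ncard_coe_finset, Finset.card_image_of_injOn]
      · -- Db.card = nv v
        have h1 : ∀ j : Fin (nv v), ∃ e : {e // e ∈ E},
            f (Sum.inr e) = Sum.inr ⟨⟨v, hvB⟩, j⟩ := by
          intro j
          obtain ⟨x, hx⟩ := hfbij.2 (Sum.inr ⟨⟨v, hvB⟩, j⟩)
          rcases x with c | e
          · have hm := (hmemt _ _).mp (hft (Sum.inl c))
            rw [hx] at hm
            simp only [myRel] at hm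
          · exact ⟨e, hx⟩
        have hcard : (Finset.univ : Finset (Fin (nv v))).card = Db.card := by
          refine Finset.card_bij (fun j _ => (h1 j).choose) ?_ ?_ ?_
          · intro j _
            have hfe := (h1 j).choose_spec
            have hm := (hmemt _ _).mp (hft (Sum.inr (h1 j).choose))
            rw [hfe] at hm
            simp only [myRel] at hm
            refine (hDbmem _).mpr ⟨?_, hm⟩
            rw [hfe]
            exact fun h => Sum.inr_ne_inl h
          · intro j₁ _ j₂ _ heq
            have hfe₁ := (h1 j₁).choose_spec
            have hfe₂ := (h1 j₂).choose_spec
            replace heq : (h1 j₁).choose = (h1 j₂).choose := heq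
            rw [heq] at hfe₁
            simpa using hfe₁.symm.trans hfe₂
          · intro e he
            obtain ⟨hne, hsnd⟩ := (hDbmem e).mp he
            have hm := (hmemt _ _).mp (hft (Sum.inr e))
            rcases hfe : f (Sum.inr e) with e' | bj
            · rw [hfe] at hm
              simp only [myRel] at hm
              subst hm
              exact absurd hfe hne
            · rw [hfe] at hm
              simp only [myRel] at hm
              rcases bj with ⟨⟨w, hw⟩, j⟩
              have hwv : w = v := hm.symm.trans hsnd
              subst hwv
              refine ⟨j, Finset.mem_univ j, ?_⟩
              have hfe' := (h1 j).choose_spec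
              have := hfinj (hfe'.trans hfe.symm)
              exact Sum.inr.inj this
        rw [← hcard]
        simp
      · intro e₁ h₁ e₂ h₂ heq
        simp only [Finset.mem_coe] at h₁ h₂
        obtain ⟨-, k₁⟩ := (hDbmem e₁).mp h₁
        obtain ⟨-, k₂⟩ := (hDbmem e₂).mp h₂
        exact Subtype.ext (Prod.ext heq (k₁.trans k₂.symm))

end Aux

set_option maxHeartbeats 1000000 in
lemma aux_arith (ξ α nR S Tc eR sp st sbt sap : ℝ)
    (hξ0 : 0 < ξ) (hξ1 : ξ < 1) (hα0 : 0 < α) (hαξ : α ≤ ξ^2/100)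
    (hn1 : 1 ≤ nR) (hS0 : 0 ≤ S) (hSn : S ≤ nR) (hT0 : 0 ≤ Tc) (hTn : Tc ≤ nR)
    (he0 : 0 ≤ eR)
    (hle1 : S*(Tc - (1/2 - 4*ξ)*nR) ≤ eR)
    (hle2 : Tc*(S - (1/2 - 4*ξ)*nR) ≤ eR)
    (hsP : sp ≤ S*((ξ+α)*nR))
    (hsT : st ≤ Tc*((ξ+α)*nR))
    (hsBT : (nR - Tc)*((ξ-α)*nR) ≤ sbt)
    (hsAP : (nR - S)*((ξ-α)*nR) ≤ sap)
    (hsum : sp + sap = st + sbt) :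
    sp ≤ eR + sbt := by
  have hn0 : (0:ℝ) ≤ nR := by linarith
  have hξξ : ξ^2 ≤ ξ := by nlinarith
  have hαsmall : α ≤ ξ/100 := by nlinarith
  have hαltξ : α < ξ := by nlinarith
  have hhalf : ξ/2 ≤ ξ - α := by linarith
  by_cases h1 : ((1:ℝ)/2 - 3*ξ)*nR ≤ Tc
  · by_cases h2 : 2*α*nR ≤ (nR - Tc)*ξ
    · -- plenty of room on the B side
      have hu0 : (0:ℝ) ≤ nR - Tc := by linarith
      have k1 : ξ*nR ≤ Tc - ((1:ℝ)/2 - 4*ξ)*nR := by nlinarith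
      have k2 : S*(ξ*nR) ≤ eR :=
        le_trans (mul_le_mul_of_nonneg_left k1 hS0) hle1
      have step1 : α*nR ≤ (nR-Tc)*(ξ/2) := by linarith
      have step2 : (nR-Tc)*(ξ/2) ≤ (nR-Tc)*(ξ-α) :=
        mul_le_mul_of_nonneg_left hhalf hu0
      have k3 : α*nR*nR ≤ (nR - Tc)*((ξ-α)*nR) := by
        nlinarith [mul_le_mul_of_nonneg_right (step1.trans step2) hn0]
      have k4 : S*(α*nR) ≤ nR*(α*nR) :=
        mul_le_mul_of_nonneg_right hSn (by positivity)
      linarith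
    · -- T is almost all of B
      push_neg at h2
      have k1' : ((1:ℝ)/2 - 3*ξ + α)*nR*ξ ≤ Tc*ξ := by nlinarith
      have k1 : ((1:ℝ)/2 - 3*ξ + α)*nR ≤ Tc := le_of_mul_le_mul_right
        (by calc ((1:ℝ)/2 - 3*ξ + α)*nR*ξ ≤ Tc*ξ := k1' ) hξ0
      have k2 : (ξ+α)*nR ≤ Tc - ((1:ℝ)/2 - 4*ξ)*nR := by linarith
      have k3 : S*((ξ+α)*nR) ≤ eR :=
        le_trans (mul_le_mul_of_nonneg_left k2 hS0) hle1
      have k4 : (0:ℝ) ≤ (nR - Tc)*((ξ-α)*nR) := by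
        apply mul_nonneg (by linarith) (by nlinarith)
      linarith
  · -- T is small : use the complementary form
    push_neg at h1
    have hkey : sp - sbt ≤ Tc*((ξ+α)*nR) - (nR - S)*((ξ-α)*nR) := by linarith
    by_cases h3 : Tc*(ξ+α) ≤ (nR - S)*(ξ-α)
    · have := mul_le_mul_of_nonneg_right h3 hn0
      nlinarith
    · -- S is large
      push_neg at h3
      have k0 : (0:ℝ) < ξ - α := by linarith
      have kpoly : ((1:ℝ)/2 + 3*ξ - α)*(ξ-α) - ((1:ℝ)/2 - 3*ξ)*(ξ+α)
          = 6*ξ^2 - α - α*ξ + α^2 := by ring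
      have kpos : (0:ℝ) ≤ 6*ξ^2 - α - α*ξ + α^2 := by nlinarith
      have k1 : (nR - S)*(ξ-α) < (((1:ℝ)/2 + 3*ξ - α)*(ξ-α))*nR := by
        have h4 : Tc*(ξ+α) < ((1:ℝ)/2 - 3*ξ)*nR*(ξ+α) :=
          mul_lt_mul_of_pos_right h1 (by linarith)
        nlinarith
      have k2 : nR - S < ((1:ℝ)/2 + 3*ξ - α)*nR := by
        refine lt_of_mul_lt_mul_right ?_ (le_of_lt k0)
        calc (nR - S)*(ξ-α) < (((1:ℝ)/2 + 3*ξ - α)*(ξ-α))*nR := k1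
          _ = ((1:ℝ)/2 + 3*ξ - α)*nR*(ξ-α) := by ring
      have k3 : (ξ+α)*nR ≤ S - ((1:ℝ)/2 - 4*ξ)*nR := by linarith
      have k4 : Tc*((ξ+α)*nR) ≤ eR :=
        le_trans (mul_le_mul_of_nonneg_left k3 hT0) hle2
      have k5 : (0:ℝ) ≤ (nR - S)*((ξ-α)*nR) := by
        apply mul_nonneg (by linarith) (by nlinarith)
      linarith

/-- Suppose `1/n ≪ α ≪ ξ ≪ 1`.  If `G` is a bipartite graph on `(A,B)` with `|A| = |B| = n`
and `δ(G) ≥ (1/2 + 4ξ)n`, and `n_v ∈ ℕ` satisfy `(ξ-α)n ≤ n_v ≤ (ξ+α)n` for every vertex `v`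
with `Σ_{a∈A} n_a = Σ_{b∈B} n_b`, then `G` contains a spanning subgraph `G'` with
`d_{G'}(v) = n_v` for every vertex `v`. -/
theorem stmt5 :
    ∀ ξ : ℝ, 0 < ξ → ξ < 1 →
    ∃ α₀ : ℝ, 0 < α₀ ∧ ∀ α : ℝ, 0 < α → α ≤ α₀ →
    ∃ n₀ : ℕ, ∀ n : ℕ, n₀ ≤ n →
    ∀ (β : Type) [Fintype β] [DecidableEq β],
    ∀ (A B : Finset β) (G : SimpleGraph β),
      Disjoint A B → A.card = n → B.card = n →
      (∀ x y : β, G.Adj x y → (x ∈ A ∧ y ∈ B) ∨ (x ∈ B ∧ y ∈ A)) →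
      (∀ v ∈ A ∪ B, ((1 : ℝ)/2 + 4*ξ) * n ≤ ((G.neighborSet v).ncard : ℝ)) →
      ∀ nv : β → ℕ,
        (∀ v ∈ A ∪ B, (ξ - α) * n ≤ (nv v : ℝ) ∧ (nv v : ℝ) ≤ (ξ + α) * n) →
        ((∑ a ∈ A, nv a) = ∑ b ∈ B, nv b) →
        ∃ G' : SimpleGraph β, G' ≤ G ∧ ∀ v ∈ A ∪ B, (G'.neighborSet v).ncard = nv v := by
  intro ξ hξ0 hξ1
  refine ⟨ξ^2/100, by positivity, fun α hα0 hα ↦ ⟨1, fun n hn β _ _ A B G hdisj hA hB hbip hdeg nv hnv hsum ↦ ?_⟩⟩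
  letI : DecidableRel G.Adj := Classical.decRel _
  apply aux_construct A B G hdisj hbip nv hsum
  intro P hPA T hTB
  -- neighbourhoods as finsets
  have hnbA : ∀ a ∈ A, G.neighborSet a = ↑(B.filter (fun y => G.Adj a y)) := by
    intro a ha
    ext y
    simp only [SimpleGraph.mem_neighborSet, Finset.coe_filter, Set.mem_setOf_eq]
    constructor
    · intro h
      rcases hbip a y h with ⟨-, hy⟩ | ⟨ha', -⟩
      · exact ⟨hy, h⟩
      · exact absurd ha (Finset.disjoint_right.mp hdisj ha')
    · exact fun h => h.2
  have hnbB : ∀ b ∈ B, G.neighborSet b = ↑(A.filter (fun y => G.Adj y b)) := by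
    intro b hb
    ext y
    simp only [SimpleGraph.mem_neighborSet, Finset.coe_filter, Set.mem_setOf_eq]
    constructor
    · intro h
      rcases hbip b y h with ⟨hb', -⟩ | ⟨-, hy⟩
      · exact absurd hb (Finset.disjoint_left.mp hdisj hb')
      · exact ⟨hy, h.symm⟩
    · exact fun h => h.2.symm
  have hdegA : ∀ a ∈ A, ((1:ℝ)/2 + 4*ξ)*n ≤ ((B.filter (fun y => G.Adj a y)).card : ℝ) := by
    intro a ha
    have h := hdeg a (Finset.mem_union_left _ ha)
    rwa [hnbA a ha, Set.ncard_coe_finset] at h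
  have hdegB : ∀ b ∈ B, ((1:ℝ)/2 + 4*ξ)*n ≤ ((A.filter (fun y => G.Adj y b)).card : ℝ) := by
    intro b hb
    have h := hdeg b (Finset.mem_union_right _ hb)
    rwa [hnbB b hb, Set.ncard_coe_finset] at h
  have hTn : T.card ≤ n := hB ▸ Finset.card_le_card hTB
  have hPn : P.card ≤ n := hA ▸ Finset.card_le_card hPA
  have hBT : ((B \ T).card : ℝ) = (n : ℝ) - T.card := by
    rw [Finset.card_sdiff_of_subset hTB, hB, Nat.cast_sub hTn]
  have hAP : ((A \ P).card : ℝ) = (n : ℝ) - P.card := by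
    rw [Finset.card_sdiff_of_subset hPA, hA, Nat.cast_sub hPn]
  -- fiberwise counts of the edge set
  have hefst : ((P ×ˢ T).filter fun p : β × β => G.Adj p.1 p.2).card
      = ∑ a ∈ P, (T.filter (fun y => G.Adj a y)).card := by
    rw [Finset.card_eq_sum_card_fiberwise (f := Prod.fst) (t := P)
      (fun p hp => (Finset.mem_product.mp (Finset.mem_filter.mp hp).1).1)]
    refine Finset.sum_congr rfl fun a ha => ?_
    refine Finset.card_bij (fun p _ => p.2) ?_ ?_ ?_
    · intro p hp
      simp only [Finset.mem_filter, Finset.mem_product] at hp ⊢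
      obtain ⟨⟨⟨-, h2⟩, h3⟩, h4⟩ := hp
      exact ⟨h2, h4 ▸ h3⟩
    · intro p₁ hp₁ p₂ hp₂ h
      simp only [Finset.mem_filter, Finset.mem_product] at hp₁ hp₂
      exact Prod.ext (hp₁.2.trans hp₂.2.symm) h
    · intro y hy
      simp only [Finset.mem_filter] at hy
      exact ⟨(a, y), by simp [Finset.mem_filter, Finset.mem_product, ha, hy.1, hy.2], rfl⟩
  have hesnd : ((P ×ˢ T).filter fun p : β × β => G.Adj p.1 p.2).card
      = ∑ b ∈ T, (P.filter (fun y => G.Adj y b)).card := by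
    rw [Finset.card_eq_sum_card_fiberwise (f := Prod.snd) (t := T)
      (fun p hp => (Finset.mem_product.mp (Finset.mem_filter.mp hp).1).2)]
    refine Finset.sum_congr rfl fun b hb => ?_
    refine Finset.card_bij (fun p _ => p.1) ?_ ?_ ?_
    · intro p hp
      simp only [Finset.mem_filter, Finset.mem_product] at hp ⊢
      obtain ⟨⟨⟨h1, -⟩, h3⟩, h4⟩ := hp
      exact ⟨h1, h4 ▸ h3⟩
    · intro p₁ hp₁ p₂ hp₂ h
      simp only [Finset.mem_filter, Finset.mem_product] at hp₁ hp₂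
      exact Prod.ext h (hp₁.2.trans hp₂.2.symm)
    · intro y hy
      simp only [Finset.mem_filter] at hy
      exact ⟨(y, b), by simp [Finset.mem_filter, Finset.mem_product, hb, hy.1, hy.2], rfl⟩
  -- per-vertex lower bounds
  have hTfil : ∀ a ∈ P, (T.card : ℝ) - ((1:ℝ)/2 - 4*ξ)*n
      ≤ ((T.filter (fun y => G.Adj a y)).card : ℝ) := by
    intro a ha
    have hsub : B.filter (fun y => G.Adj a y) ⊆ (T.filter fun y => G.Adj a y) ∪ (B \ T) := by
      intro y hy
      rw [Finset.mem_filter] at hy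
      by_cases hyT : y ∈ T
      · exact Finset.mem_union_left _ (Finset.mem_filter.mpr ⟨hyT, hy.2⟩)
      · exact Finset.mem_union_right _ (Finset.mem_sdiff.mpr ⟨hy.1, hyT⟩)
    have h1 := (Finset.card_le_card hsub).trans (Finset.card_union_le _ _)
    have h2 := hdegA a (hPA ha)
    have h4 : ((B.filter fun y => G.Adj a y).card : ℝ)
        ≤ ((T.filter fun y => G.Adj a y).card : ℝ) + ((B \ T).card : ℝ) := by
      exact_mod_cast h1
    rw [hBT] at h4
    linarith
  have hPfil : ∀ b ∈ T, (P.card : ℝ) - ((1:ℝ)/2 - 4*ξ)*n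
      ≤ ((P.filter (fun y => G.Adj y b)).card : ℝ) := by
    intro b hb
    have hsub : A.filter (fun y => G.Adj y b) ⊆ (P.filter fun y => G.Adj y b) ∪ (A \ P) := by
      intro y hy
      rw [Finset.mem_filter] at hy
      by_cases hyP : y ∈ P
      · exact Finset.mem_union_left _ (Finset.mem_filter.mpr ⟨hyP, hy.2⟩)
      · exact Finset.mem_union_right _ (Finset.mem_sdiff.mpr ⟨hy.1, hyP⟩)
    have h1 := (Finset.card_le_card hsub).trans (Finset.card_union_le _ _)
    have h2 := hdegB b (hTB hb)
    have h4 : ((A.filter fun y => G.Adj y b).card : ℝ)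
        ≤ ((P.filter fun y => G.Adj y b).card : ℝ) + ((A \ P).card : ℝ) := by
      exact_mod_cast h1
    rw [hAP] at h4
    linarith
  have hle1 : (P.card : ℝ) * ((T.card : ℝ) - ((1:ℝ)/2 - 4*ξ)*n)
      ≤ (((P ×ˢ T).filter fun p : β × β => G.Adj p.1 p.2).card : ℝ) := by
    have h5 : ((((P ×ˢ T).filter fun p : β × β => G.Adj p.1 p.2).card : ℕ) : ℝ)
        = ∑ a ∈ P, ((T.filter (fun y => G.Adj a y)).card : ℝ) := by
      rw [hefst]; push_cast; rfl
    rw [h5]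
    calc (P.card : ℝ) * ((T.card : ℝ) - ((1:ℝ)/2 - 4*ξ)*n)
        = ∑ _a ∈ P, ((T.card : ℝ) - ((1:ℝ)/2 - 4*ξ)*n) := by
          rw [Finset.sum_const, nsmul_eq_mul]
      _ ≤ _ := Finset.sum_le_sum hTfil
  have hle2 : (T.card : ℝ) * ((P.card : ℝ) - ((1:ℝ)/2 - 4*ξ)*n)
      ≤ (((P ×ˢ T).filter fun p : β × β => G.Adj p.1 p.2).card : ℝ) := by
    have h5 : ((((P ×ˢ T).filter fun p : β × β => G.Adj p.1 p.2).card : ℕ) : ℝ)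
        = ∑ b ∈ T, ((P.filter (fun y => G.Adj y b)).card : ℝ) := by
      rw [hesnd]; push_cast; rfl
    rw [h5]
    calc (T.card : ℝ) * ((P.card : ℝ) - ((1:ℝ)/2 - 4*ξ)*n)
        = ∑ _b ∈ T, ((P.card : ℝ) - ((1:ℝ)/2 - 4*ξ)*n) := by
          rw [Finset.sum_const, nsmul_eq_mul]
      _ ≤ _ := Finset.sum_le_sum hPfil
  -- demand sums
  have hsP : (∑ a ∈ P, (nv a : ℝ)) ≤ (P.card : ℝ) * ((ξ+α)*n) := by
    calc ∑ a ∈ P, (nv a : ℝ) ≤ ∑ _a ∈ P, (ξ+α)*(n:ℝ) :=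
          Finset.sum_le_sum fun a ha => (hnv a (Finset.mem_union_left _ (hPA ha))).2
      _ = (P.card : ℝ) * ((ξ+α)*n) := by rw [Finset.sum_const, nsmul_eq_mul]
  have hsT : (∑ b ∈ T, (nv b : ℝ)) ≤ (T.card : ℝ) * ((ξ+α)*n) := by
    calc ∑ b ∈ T, (nv b : ℝ) ≤ ∑ _b ∈ T, (ξ+α)*(n:ℝ) :=
          Finset.sum_le_sum fun b hb => (hnv b (Finset.mem_union_right _ (hTB hb))).2
      _ = (T.card : ℝ) * ((ξ+α)*n) := by rw [Finset.sum_const, nsmul_eq_mul]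
  have hsBT : ((n:ℝ) - T.card) * ((ξ-α)*n) ≤ ∑ b ∈ B \ T, (nv b : ℝ) := by
    calc ((n:ℝ) - T.card) * ((ξ-α)*n) = ∑ _b ∈ B \ T, (ξ-α)*(n:ℝ) := by
          rw [Finset.sum_const, nsmul_eq_mul, hBT]
      _ ≤ _ := Finset.sum_le_sum fun b hb =>
          (hnv b (Finset.mem_union_right _ (Finset.mem_sdiff.mp hb).1)).1
  have hsAP : ((n:ℝ) - P.card) * ((ξ-α)*n) ≤ ∑ a ∈ A \ P, (nv a : ℝ) := by
    calc ((n:ℝ) - P.card) * ((ξ-α)*n) = ∑ _a ∈ A \ P, (ξ-α)*(n:ℝ) := by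
          rw [Finset.sum_const, nsmul_eq_mul, hAP]
      _ ≤ _ := Finset.sum_le_sum fun a ha =>
          (hnv a (Finset.mem_union_left _ (Finset.mem_sdiff.mp ha).1)).1
  have hsum' : (∑ a ∈ P, (nv a : ℝ)) + (∑ a ∈ A \ P, (nv a : ℝ))
      = (∑ b ∈ T, (nv b : ℝ)) + (∑ b ∈ B \ T, (nv b : ℝ)) := by
    have h1 : (∑ a ∈ A \ P, (nv a : ℝ)) + (∑ a ∈ P, (nv a : ℝ)) = ∑ a ∈ A, (nv a : ℝ) :=
      Finset.sum_sdiff hPA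
    have h2 : (∑ b ∈ B \ T, (nv b : ℝ)) + (∑ b ∈ T, (nv b : ℝ)) = ∑ b ∈ B, (nv b : ℝ) :=
      Finset.sum_sdiff hTB
    have h3 : (∑ a ∈ A, (nv a : ℝ)) = ∑ b ∈ B, (nv b : ℝ) := by exact_mod_cast hsum
    linarith
  -- pass to the reals
  suffices hreal : (∑ a ∈ P, (nv a : ℝ)) ≤
      (((P ×ˢ T).filter fun p : β × β => G.Adj p.1 p.2).card : ℝ) + ∑ b ∈ B \ T, (nv b : ℝ) by
    have := hreal
    push_cast at this
    exact_mod_cast this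
  -- pure real arithmetic
  have hn1 : (1:ℝ) ≤ (n:ℝ) := by exact_mod_cast hn
  have hS0 : (0:ℝ) ≤ (P.card : ℝ) := by positivity
  have hT0 : (0:ℝ) ≤ (T.card : ℝ) := by positivity
  have hSn : (P.card : ℝ) ≤ n := by exact_mod_cast hPn
  have hTn' : (T.card : ℝ) ≤ n := by exact_mod_cast hTn
  have he0 : (0:ℝ) ≤ (((P ×ˢ T).filter fun p : β × β => G.Adj p.1 p.2).card : ℝ) := by
    positivity
  exact aux_arith ξ α (n : ℝ) (P.card : ℝ) (T.card : ℝ) _ _ _ _ _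
    hξ0 hξ1 hα0 hα hn1 hS0 hSn hT0 hTn' he0 hle1 hle2 hsP hsT hsBT hsAP hsum'
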